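/- Every locally two-distance set in ℝ^d with at least d(d+1)/2 + 3 points is a two-distance set. -/

import Mathlib

open scoped Classical
open Finset Module


/-- `A_X(x)`: the set of distances from `x` to the other points of `X`. -/
noncomputable def distancesFrom {d : ℕ} (X : Finset (EuclideanSpace ℝ (Fin d)))
    (x : EuclideanSpace ℝ (Fin d)) : Finset ℝ :=
  (X.erase x).image (fun y => dist x y)

/-- `A(X)`: the set of distances between distinct points of `X`. -/
noncomputable def distSet {d : ℕ} (X : Finset (EuclideanSpace ℝ (Fin d))) : Finset ℝ :=
  X.offDiag.image (fun p => dist p.1 p.2)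

local notation "⟪" x ", " y "⟫" => @inner ℝ _ _ x y

variable {d : ℕ}

noncomputable def diffSpan (C : Finset (EuclideanSpace ℝ (Fin d))) :
    Submodule ℝ (EuclideanSpace ℝ (Fin d)) :=
  Submodule.span ℝ {v | ∃ x ∈ C, ∃ y ∈ C, v = x - y}

lemma diffSpan_rank_pos {C : Finset (EuclideanSpace ℝ (Fin d))} (hC : 2 ≤ C.card) :
    1 ≤ finrank ℝ (diffSpan C) := by
  obtain ⟨x, hx, y, hy, hxy⟩ := Finset.one_lt_card.mp hC
  have hv : x - y ∈ diffSpan C := Submodule.subset_span ⟨x, hx, y, hy, rfl⟩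
  have : Nontrivial (diffSpan C) := by
    refine ⟨⟨x - y, hv⟩, 0, ?_⟩
    simp [Subtype.ext_iff, sub_eq_zero, hxy]
  exact Module.finrank_pos

lemma norm_sub_sq' (a b : EuclideanSpace ℝ (Fin d)) :
    ‖a - b‖ ^ 2 = ‖a‖ ^ 2 - 2 * ⟪a, b⟫ + ‖b‖ ^ 2 := by
  rw [norm_sub_sq_real]

set_option maxHeartbeats 2000000 in
lemma classBound (C : Finset (EuclideanSpace ℝ (Fin d))) (y0 : EuclideanSpace ℝ (Fin d))
    (r α β : ℝ) (hα : α ≠ 0) (hβ : β ≠ 0)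
    (hd2 : ∀ x ∈ C, ∀ z ∈ C, x ≠ z → dist x z = α ∨ dist x z = β)
    (hs : ∀ x ∈ C, dist x y0 = r) (hC : 2 ≤ C.card) :
    2 * C.card ≤ (finrank ℝ (diffSpan C)) * (finrank ℝ (diffSpan C) + 3) := by
  set V := diffSpan C with hV
  set q := finrank ℝ V with hq
  have hq1 : 1 ≤ q := diffSpan_rank_pos hC
  obtain ⟨x0, hx0⟩ : C.Nonempty := Finset.card_pos.mp (by omega)
  have hmem : ∀ t ∈ C, t - x0 ∈ V := fun t ht => Submodule.subset_span ⟨t, ht, x0, hx0, rfl⟩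
  haveI : FiniteDimensional ℝ V := inferInstance
  set b := stdOrthonormalBasis ℝ V with hb
  -- expansion lemma
  have expand : ∀ v, v ∈ V → ∀ w : EuclideanSpace ℝ (Fin d),
      ⟪v, w⟫ = ∑ i, ⟪((b i : V) : EuclideanSpace ℝ (Fin d)), v⟫ * ⟪((b i : V) : EuclideanSpace ℝ (Fin d)), w⟫ := by
    intro v hv w
    have h1 : ((∑ i, ⟪((b i : V) : EuclideanSpace ℝ (Fin d)), v⟫ • b i : V) : EuclideanSpace ℝ (Fin d)) = v := by
      have h2 := congrArg (Subtype.val) (b.sum_repr' ⟨v, hv⟩)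
      simpa [Submodule.coe_inner] using h2
    conv_lhs => rw [← h1]
    push_cast
    rw [sum_inner]
    congr 1; ext i
    rw [real_inner_smul_left]
  -- basis vectors in ambient space, coordinates, sphere constant
  set bv : Fin q → EuclideanSpace ℝ (Fin d) := fun i => ((b i : V) : EuclideanSpace ℝ (Fin d)) with hbv
  set M : Fin q → (↥C → ℝ) := fun i t => ⟪bv i, (t : EuclideanSpace ℝ (Fin d)) - x0⟫ with hM
  set cc : Fin q → ℝ := fun i => ⟪bv i, y0 - x0⟫ with hcc
  set e0 : ℝ := r ^ 2 - ‖y0 - x0‖ ^ 2 with he0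
  have hσ : ∀ t : ↥C, ∑ i, M i t * M i t = 2 * (∑ i, M i t * cc i) + e0 := by
    intro t
    have ht : (t : EuclideanSpace ℝ (Fin d)) - x0 ∈ V := hmem _ t.2
    have hA' : ∑ i, M i t * M i t
        = ⟪(t : EuclideanSpace ℝ (Fin d)) - x0, (t : EuclideanSpace ℝ (Fin d)) - x0⟫ :=
      (expand _ ht ((t : EuclideanSpace ℝ (Fin d)) - x0)).symm
    have hB' : ∑ i, M i t * cc i = ⟪(t : EuclideanSpace ℝ (Fin d)) - x0, y0 - x0⟫ :=
      (expand _ ht (y0 - x0)).symm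
    have hr : ‖(t : EuclideanSpace ℝ (Fin d)) - y0‖ ^ 2 = r ^ 2 := by
      rw [← dist_eq_norm, hs _ t.2]
    have hsplit : (t : EuclideanSpace ℝ (Fin d)) - y0
        = ((t : EuclideanSpace ℝ (Fin d)) - x0) - (y0 - x0) := by abel
    rw [hsplit, norm_sub_sq'] at hr
    have hn : ‖(t : EuclideanSpace ℝ (Fin d)) - x0‖ ^ 2
        = ⟪(t : EuclideanSpace ℝ (Fin d)) - x0, (t : EuclideanSpace ℝ (Fin d)) - x0⟫ :=
      (real_inner_self_eq_norm_sq _).symm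
    rw [hn] at hr
    linarith [hA', hB', hr]
  have hdist : ∀ x t : ↥C, ‖(t : EuclideanSpace ℝ (Fin d)) - (x : EuclideanSpace ℝ (Fin d))‖ ^ 2
      = ∑ i, (2 * cc i - 2 * M i x) * M i t + (e0 + ‖(x : EuclideanSpace ℝ (Fin d)) - x0‖ ^ 2) := by
    intro x t
    have ht : (t : EuclideanSpace ℝ (Fin d)) - x0 ∈ V := hmem _ t.2
    have hB' : ∑ i, M i t * M i x
        = ⟪(t : EuclideanSpace ℝ (Fin d)) - x0, (x : EuclideanSpace ℝ (Fin d)) - x0⟫ :=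
      (expand _ ht ((x : EuclideanSpace ℝ (Fin d)) - x0)).symm
    have hsplit : (t : EuclideanSpace ℝ (Fin d)) - (x : EuclideanSpace ℝ (Fin d))
        = ((t : EuclideanSpace ℝ (Fin d)) - x0) - ((x : EuclideanSpace ℝ (Fin d)) - x0) := by abel
    rw [hsplit, norm_sub_sq']
    have hn : ‖(t : EuclideanSpace ℝ (Fin d)) - x0‖ ^ 2
        = ⟪(t : EuclideanSpace ℝ (Fin d)) - x0, (t : EuclideanSpace ℝ (Fin d)) - x0⟫ :=
      (real_inner_self_eq_norm_sq _).symm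
    have hA' : ∑ i, M i t * M i t
        = ⟪(t : EuclideanSpace ℝ (Fin d)) - x0, (t : EuclideanSpace ℝ (Fin d)) - x0⟫ :=
      (expand _ ht ((t : EuclideanSpace ℝ (Fin d)) - x0)).symm
    have hsum : ∑ i, (2 * cc i - 2 * M i x) * M i t
        = 2 * (∑ i, M i t * cc i) - 2 * (∑ i, M i t * M i x) := by
      rw [Finset.mul_sum, Finset.mul_sum, ← Finset.sum_sub_distrib]
      apply Finset.sum_congr rfl; intro i _; ring
    have hσt := hσ t
    linarith [hA', hB', hsum, hσt]
  -- affine span and quadratic span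
  set Waff : Submodule ℝ (↥C → ℝ) := Submodule.span ℝ ({(1 : ↥C → ℝ)} ∪ Set.range M) with hWaff
  have hfactor : ∀ (x : ↥C) (ξ : ℝ),
      (fun t : ↥C => ‖(t : EuclideanSpace ℝ (Fin d)) - (x : EuclideanSpace ℝ (Fin d))‖ ^ 2 - ξ) ∈ Waff := by
    intro x ξ
    have hrepr : (fun t : ↥C => ‖(t : EuclideanSpace ℝ (Fin d)) - (x : EuclideanSpace ℝ (Fin d))‖ ^ 2 - ξ)
        = (∑ i, (2 * cc i - 2 * M i x) • M i)
          + (e0 + ‖(x : EuclideanSpace ℝ (Fin d)) - x0‖ ^ 2 - ξ) • (1 : ↥C → ℝ) := by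
      funext t
      simp only [Pi.add_apply, Pi.smul_apply, Finset.sum_apply, Pi.one_apply, smul_eq_mul,
        mul_one]
      rw [hdist x t]; ring
    rw [hrepr]
    exact Submodule.add_mem _
      (Submodule.sum_mem _ fun i _ => Submodule.smul_mem _ _
        (Submodule.subset_span (Or.inr ⟨i, rfl⟩)))
      (Submodule.smul_mem _ _ (Submodule.subset_span (Or.inl rfl)))
  set G : Sym2 (Fin q) → (↥C → ℝ) :=
    Sym2.lift ⟨fun i j => M i * M j, fun i j => mul_comm _ _⟩ with hG
  have hi0 : 0 < q := hq1
  set i0 : Fin q := ⟨0, hi0⟩ with hi0def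
  set T : Finset (↥C → ℝ) :=
    insert (1 : ↥C → ℝ)
      ((Finset.univ.image M) ∪ ((Finset.univ.erase (Sym2.mk i0 i0)).image G)) with hT
  set W : Submodule ℝ (↥C → ℝ) := Submodule.span ℝ (T : Set (↥C → ℝ)) with hW
  have h1W : (1 : ↥C → ℝ) ∈ W := Submodule.subset_span (by simp [hT])
  have hMW : ∀ i, M i ∈ W := fun i => Submodule.subset_span (by
    simp only [hT, Finset.coe_insert, Set.mem_insert_iff, Finset.coe_union, Set.mem_union]
    exact Or.inr (Or.inl (by simp [Finset.mem_coe, Finset.mem_image])))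
  have hGW : ∀ p, p ≠ Sym2.mk i0 i0 → G p ∈ W := fun p hp => Submodule.subset_span (by
    simp only [hT, Finset.coe_insert, Set.mem_insert_iff, Finset.coe_union, Set.mem_union]
    refine Or.inr (Or.inr ?_)
    simp only [Finset.mem_coe, Finset.mem_image]
    exact ⟨p, Finset.mem_erase.mpr ⟨hp, Finset.mem_univ _⟩, rfl⟩)
  have hprod : ∀ i j, M i * M j ∈ W := by
    intro i j
    by_cases h : Sym2.mk i j = Sym2.mk i0 i0
    · have hij : i = i0 ∧ j = i0 := by
        rcases Sym2.eq_iff.mp h with ⟨h1, h2⟩ | ⟨h1, h2⟩ <;> exact ⟨h1, h2⟩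
      rcases hij with ⟨rfl, rfl⟩
      have hrepr : M i0 * M i0
          = ((∑ i, (2 * cc i) • M i) + e0 • (1 : ↥C → ℝ))
            - ∑ i ∈ Finset.univ.erase i0, M i * M i := by
        funext t
        simp only [Pi.mul_apply, Pi.sub_apply, Pi.add_apply, Pi.smul_apply, Finset.sum_apply,
          Pi.one_apply, smul_eq_mul, mul_one]
        have hsub : ∑ x ∈ Finset.univ.erase i0, M x t * M x t + M i0 t * M i0 t
            = ∑ x : Fin q, M x t * M x t :=
          Finset.sum_erase_add _ _ (Finset.mem_univ i0)
        have hσt := hσ t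
        have hfold : ∑ i, 2 * cc i * M i t = 2 * ∑ i, M i t * cc i := by
          rw [Finset.mul_sum]; apply Finset.sum_congr rfl; intro i _; ring
        linarith [hsub, hσt, hfold]
      rw [hrepr]
      refine Submodule.sub_mem _ (Submodule.add_mem _
        (Submodule.sum_mem _ fun i _ => Submodule.smul_mem _ _ (hMW i))
        (Submodule.smul_mem _ _ h1W)) (Submodule.sum_mem _ ?_)
      intro i hi
      have hii : Sym2.mk i i ≠ Sym2.mk i0 i0 := by
        intro hcon
        rcases Sym2.eq_iff.mp hcon with ⟨h1, _⟩ | ⟨h1, _⟩ <;>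
          exact (Finset.mem_erase.mp hi).1 h1
      have := hGW _ hii
      simpa [hG, Sym2.lift_mk] using this
    · have := hGW _ h
      simpa [hG, Sym2.lift_mk] using this
  have hmul : ∀ f ∈ Waff, ∀ g ∈ Waff, f * g ∈ W := by
    intro f hf g hg
    refine Submodule.span_induction₂ (p := fun f g _ _ => f * g ∈ W) ?_ ?_ ?_ ?_ ?_ ?_ ?_ hf hg
    · rintro x y (rfl | ⟨i, rfl⟩) (rfl | ⟨j, rfl⟩)
      · simpa using h1W
      · simpa using hMW j
      · simpa using hMW i
      · exact hprod i j
    · intro y _; simpa using Submodule.zero_mem W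
    · intro x _; simpa using Submodule.zero_mem W
    · intro x y z _ _ _ h1 h2; rw [add_mul]; exact Submodule.add_mem _ h1 h2
    · intro x y z _ _ _ h1 h2; rw [mul_add]; exact Submodule.add_mem _ h1 h2
    · intro rr x y _ _ h1; rw [smul_mul_assoc]; exact Submodule.smul_mem _ _ h1
    · intro rr x y _ _ h1; rw [mul_smul_comm]; exact Submodule.smul_mem _ _ h1
  set F : ↥C → (↥C → ℝ) := fun x =>
    (fun t : ↥C => ‖(t : EuclideanSpace ℝ (Fin d)) - (x : EuclideanSpace ℝ (Fin d))‖ ^ 2 - α ^ 2)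
      * (fun t : ↥C => ‖(t : EuclideanSpace ℝ (Fin d)) - (x : EuclideanSpace ℝ (Fin d))‖ ^ 2 - β ^ 2)
    with hF
  have hFW : ∀ x, F x ∈ W := fun x => hmul _ (hfactor x (α ^ 2)) _ (hfactor x (β ^ 2))
  have hFxx : ∀ x : ↥C, F x x = α ^ 2 * β ^ 2 := by
    intro x
    simp only [hF, Pi.mul_apply, sub_self, norm_zero]
    ring
  have hFxt : ∀ x t : ↥C, t ≠ x → F x t = 0 := by
    intro x t hne
    have hne' : (t : EuclideanSpace ℝ (Fin d)) ≠ (x : EuclideanSpace ℝ (Fin d)) := by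
      exact fun hcon => hne (Subtype.ext hcon)
    have hd := hd2 _ t.2 _ x.2 hne'
    have hnorm : dist (t : EuclideanSpace ℝ (Fin d)) (x : EuclideanSpace ℝ (Fin d))
        = ‖(t : EuclideanSpace ℝ (Fin d)) - (x : EuclideanSpace ℝ (Fin d))‖ := dist_eq_norm _ _
    simp only [hF, Pi.mul_apply]
    rcases hd with h | h
    · rw [hnorm] at h; rw [h]; ring
    · rw [hnorm] at h; rw [h]; ring
  have hFind : LinearIndependent ℝ F := by
    rw [linearIndependent_iff']
    intro s g hsum x hx
    have hev := congrFun hsum x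
    simp only [Finset.sum_apply, Pi.smul_apply, smul_eq_mul, Pi.zero_apply] at hev
    rw [Finset.sum_eq_single x (fun t _ ht => by rw [hFxt t x (Ne.symm ht), mul_zero])
      (fun h => absurd hx h)] at hev
    rw [hFxx x] at hev
    have hαβ : α ^ 2 * β ^ 2 ≠ 0 :=
      mul_ne_zero (pow_ne_zero 2 hα) (pow_ne_zero 2 hβ)
    exact (mul_eq_zero.mp hev).resolve_right hαβ
  haveI : FiniteDimensional ℝ W := FiniteDimensional.span_of_finite ℝ T.finite_toSet
  have hF'ind : LinearIndependent ℝ (fun x => (⟨F x, hFW x⟩ : W)) := by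
    apply LinearIndependent.of_comp W.subtype
    exact hFind
  have hcard1 : C.card ≤ finrank ℝ W := by
    rw [← Fintype.card_coe]
    exact hF'ind.fintype_card_le_finrank
  have hcard2 : finrank ℝ W ≤ T.card := finrank_span_finset_le_card T
  obtain ⟨P, hP⟩ : ∃ P, Fintype.card (Sym2 (Fin q)) = P := ⟨_, rfl⟩
  have hP2 : 2 * P = (q + 1) * q := by
    rw [← hP, Sym2.card, Fintype.card_fin, Nat.choose_two_right]
    simp only [Nat.add_sub_cancel]
    rw [mul_comm]
    apply Nat.div_mul_cancel
    exact (by simpa [mul_comm] using Nat.even_mul_succ_self q : Even ((q + 1) * q)).two_dvd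
  have hTcard : T.card ≤ 1 + (q + (P - 1)) := by
    refine (Finset.card_insert_le _ _).trans ?_
    have hun := Finset.card_union_le (Finset.univ.image M)
      ((Finset.univ.erase (Sym2.mk i0 i0)).image G)
    have h1 : (Finset.univ.image M).card ≤ q := Finset.card_image_le.trans (by simp)
    have hu : (Finset.univ : Finset (Sym2 (Fin q))).card = P := by
      rw [Finset.card_univ, hP]
    have h2 : ((Finset.univ.erase (Sym2.mk i0 i0)).image G).card ≤ P - 1 :=
      Finset.card_image_le.trans
        (by rw [Finset.card_erase_of_mem (Finset.mem_univ _), hu])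
    omega
  have hP1 : 1 ≤ P := by nlinarith
  have hfinal : 2 * C.card ≤ 2 * (q + P) := by omega
  nlinarith [hfinal, hP2]

lemma inner_diff_zero {x x' y y' : EuclideanSpace ℝ (Fin d)} {ρ ρ' : ℝ}
    (h1 : dist x y = ρ) (h2 : dist x' y = ρ) (h3 : dist x y' = ρ') (h4 : dist x' y' = ρ') :
    ⟪x - x', y - y'⟫ = 0 := by
  have e1 : ‖x - y‖ ^ 2 = ‖x' - y‖ ^ 2 := by
    rw [← dist_eq_norm, ← dist_eq_norm, h1, h2]
  have e2 : ‖x - y'‖ ^ 2 = ‖x' - y'‖ ^ 2 := by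
    rw [← dist_eq_norm, ← dist_eq_norm, h3, h4]
  rw [norm_sub_sq', norm_sub_sq'] at e1 e2
  simp only [inner_sub_left, inner_sub_right]
  linarith [e1, e2]

lemma diffSpan_orth {C Y : Finset (EuclideanSpace ℝ (Fin d))}
    (h : ∀ y ∈ Y, ∃ ρ, ∀ x ∈ C, dist x y = ρ) :
    diffSpan Y ≤ (diffSpan C)ᗮ := by
  rw [diffSpan, Submodule.span_le]
  rintro v ⟨y, hy, y', hy', rfl⟩
  rw [SetLike.mem_coe, Submodule.mem_orthogonal]
  intro u hu
  induction hu using Submodule.span_induction with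
  | mem u hu =>
      obtain ⟨x, hx, x', hx', rfl⟩ := hu
      obtain ⟨ρ, hρ⟩ := h y hy
      obtain ⟨ρ', hρ'⟩ := h y' hy'
      exact inner_diff_zero (hρ x hx) (hρ x' hx') (hρ' x hx) (hρ' x' hx')
  | zero => simp
  | add u w _ _ h1 h2 => rw [inner_add_left, h1, h2]; ring
  | smul a u _ h1 => rw [real_inner_smul_left, h1]; ring

lemma rank_add_of_orth {A B : Submodule ℝ (EuclideanSpace ℝ (Fin d))} (h : B ≤ Aᗮ) :
    finrank ℝ A + finrank ℝ B = finrank ℝ (A ⊔ B : Submodule ℝ (EuclideanSpace ℝ (Fin d))) := by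
  have h0 : A ⊓ B = ⊥ := by
    rw [eq_bot_iff]
    rintro v ⟨hvA, hvB⟩
    have h2 : ⟪v, v⟫ = (0 : ℝ) := (Submodule.mem_orthogonal _ _).mp (h hvB) v hvA
    have hv0 : v = 0 := inner_self_eq_zero.mp h2
    simp [hv0]
  have := Submodule.finrank_sup_add_finrank_inf_eq A B
  rw [h0] at this
  simp only [finrank_bot, add_zero] at this
  omega

lemma diffSpan_mono {C C' : Finset (EuclideanSpace ℝ (Fin d))} (h : C ⊆ C') :
    diffSpan C ≤ diffSpan C' := by
  apply Submodule.span_mono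
  rintro v ⟨x, hx, y, hy, rfl⟩
  exact ⟨x, h hx, y, h hy, rfl⟩

lemma rank_split {C Y : Finset (EuclideanSpace ℝ (Fin d))}
    (h : ∀ y ∈ Y, ∃ ρ, ∀ x ∈ C, dist x y = ρ) :
    finrank ℝ (diffSpan C) + finrank ℝ (diffSpan Y) ≤ finrank ℝ (diffSpan (C ∪ Y)) := by
  rw [rank_add_of_orth (diffSpan_orth h)]
  apply Submodule.finrank_mono
  exact sup_le (diffSpan_mono Finset.subset_union_left) (diffSpan_mono Finset.subset_union_right)

lemma rank_le_d (C : Finset (EuclideanSpace ℝ (Fin d))) : finrank ℝ (diffSpan C) ≤ d := by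
  have := Submodule.finrank_le (diffSpan C)
  rwa [finrank_euclideanSpace_fin] at this

lemma rank_split_d {C Y : Finset (EuclideanSpace ℝ (Fin d))}
    (h : ∀ y ∈ Y, ∃ ρ, ∀ x ∈ C, dist x y = ρ) :
    finrank ℝ (diffSpan C) + finrank ℝ (diffSpan Y) ≤ d := by
  refine (rank_split h).trans (rank_le_d _)

set_option maxHeartbeats 1000000 in
lemma oneDistBound (X : Finset (EuclideanSpace ℝ (Fin d))) (a : ℝ) (ha : a ≠ 0)
    (h : ∀ x ∈ X, ∀ y ∈ X, x ≠ y → dist x y = a) : X.card ≤ d + 2 := by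
  classical
  set nsq : ↥X → ℝ := fun t => ‖(t : EuclideanSpace ℝ (Fin d))‖ ^ 2 with hnsq
  set coord : Fin d → (↥X → ℝ) := fun i t => (t : EuclideanSpace ℝ (Fin d)) i with hcoord
  set T : Finset (↥X → ℝ) :=
    insert (1 : ↥X → ℝ) (insert nsq (Finset.univ.image coord)) with hT
  set W : Submodule ℝ (↥X → ℝ) := Submodule.span ℝ (T : Set (↥X → ℝ)) with hW
  have h1W : (1 : ↥X → ℝ) ∈ W := Submodule.subset_span (by simp [hT])
  have hnW : nsq ∈ W := Submodule.subset_span (by simp [hT])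
  have hcW : ∀ i, coord i ∈ W := fun i => Submodule.subset_span (by
    simp only [hT, Finset.coe_insert, Set.mem_insert_iff]
    exact Or.inr (Or.inr (by simp [Finset.mem_coe, Finset.mem_image])))
  set F : ↥X → (↥X → ℝ) := fun x t =>
    ‖(t : EuclideanSpace ℝ (Fin d)) - (x : EuclideanSpace ℝ (Fin d))‖ ^ 2 - a ^ 2 with hF
  have hFW : ∀ x, F x ∈ W := by
    intro x
    have hrepr : F x = nsq - (∑ i, (2 * (x : EuclideanSpace ℝ (Fin d)) i) • coord i)
        + (‖(x : EuclideanSpace ℝ (Fin d))‖ ^ 2 - a ^ 2) • (1 : ↥X → ℝ) := by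
      funext t
      simp only [hF, Pi.add_apply, Pi.sub_apply, Pi.smul_apply, Finset.sum_apply,
        Pi.one_apply, smul_eq_mul, mul_one, hnsq, hcoord]
      rw [norm_sub_sq']
      have hip : ⟪(t : EuclideanSpace ℝ (Fin d)), (x : EuclideanSpace ℝ (Fin d))⟫
          = ∑ i, (t : EuclideanSpace ℝ (Fin d)) i * (x : EuclideanSpace ℝ (Fin d)) i := by
        rw [PiLp.inner_apply]; simp [RCLike.inner_apply, mul_comm]
      rw [hip, Finset.mul_sum]
      rw [Finset.sum_congr rfl (fun i _ => by ring :
        ∀ i ∈ Finset.univ, 2 * (x : EuclideanSpace ℝ (Fin d)) i * (t : EuclideanSpace ℝ (Fin d)) i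
          = 2 * ((t : EuclideanSpace ℝ (Fin d)) i * (x : EuclideanSpace ℝ (Fin d)) i))]
      rw [← Finset.mul_sum]
      ring
    rw [hrepr]
    exact Submodule.add_mem _
      (Submodule.sub_mem _ hnW
        (Submodule.sum_mem _ fun i _ => Submodule.smul_mem _ _ (hcW i)))
      (Submodule.smul_mem _ _ h1W)
  have hFxx : ∀ x : ↥X, F x x = -(a ^ 2) := by
    intro x; simp [hF]
  have hFxt : ∀ x t : ↥X, t ≠ x → F x t = 0 := by
    intro x t hne
    have hne' : (t : EuclideanSpace ℝ (Fin d)) ≠ (x : EuclideanSpace ℝ (Fin d)) :=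
      fun hcon => hne (Subtype.ext hcon)
    have hd := h _ t.2 _ x.2 hne'
    simp only [hF]
    rw [← dist_eq_norm, hd]; ring
  have hFind : LinearIndependent ℝ F := by
    rw [linearIndependent_iff']
    intro s g hsum x hx
    have hev := congrFun hsum x
    simp only [Finset.sum_apply, Pi.smul_apply, smul_eq_mul, Pi.zero_apply] at hev
    rw [Finset.sum_eq_single x (fun t _ ht => by rw [hFxt t x (Ne.symm ht), mul_zero])
      (fun hcon => absurd hx hcon)] at hev
    rw [hFxx x] at hev
    have : -(a ^ 2) ≠ 0 := by
      simpa using pow_ne_zero 2 ha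
    rcases mul_eq_zero.mp hev with h1 | h1
    · exact h1
    · exact absurd h1 this
  haveI : FiniteDimensional ℝ W := FiniteDimensional.span_of_finite ℝ T.finite_toSet
  have hF'ind : LinearIndependent ℝ (fun x => (⟨F x, hFW x⟩ : W)) := by
    apply LinearIndependent.of_comp W.subtype
    exact hFind
  have hc1 : X.card ≤ finrank ℝ W := by
    rw [← Fintype.card_coe]
    exact hF'ind.fintype_card_le_finrank
  have hc2 : finrank ℝ W ≤ T.card := finrank_span_finset_le_card T
  have hc3 : T.card ≤ d + 2 := by
    refine (Finset.card_insert_le _ _).trans ?_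
    have := (Finset.card_insert_le nsq (Finset.univ.image coord))
    have himg : (Finset.univ.image coord).card ≤ d := Finset.card_image_le.trans (by simp)
    omega
  omega
-- helper lemmas about distancesFrom / distSet (to be appended after defs)
section Helpers
variable {d : ℕ} {X : Finset (EuclideanSpace ℝ (Fin d))}

lemma mem_distancesFrom {x : EuclideanSpace ℝ (Fin d)} {z : ℝ} :
    z ∈ distancesFrom X x ↔ ∃ y ∈ X, y ≠ x ∧ dist x y = z := by
  simp only [distancesFrom, Finset.mem_image, Finset.mem_erase]
  constructor
  · rintro ⟨y, ⟨hyx, hyX⟩, rfl⟩; exact ⟨y, hyX, hyx, rfl⟩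
  · rintro ⟨y, hyX, hyx, rfl⟩; exact ⟨y, ⟨hyx, hyX⟩, rfl⟩

lemma dist_mem_distancesFrom {x y : EuclideanSpace ℝ (Fin d)} (hy : y ∈ X) (hne : y ≠ x) :
    dist x y ∈ distancesFrom X x :=
  mem_distancesFrom.mpr ⟨y, hy, hne, rfl⟩

lemma mem_distSet {u : ℝ} :
    u ∈ distSet X ↔ ∃ x ∈ X, ∃ y ∈ X, x ≠ y ∧ dist x y = u := by
  simp only [distSet, Finset.mem_image, Finset.mem_offDiag]
  constructor
  · rintro ⟨⟨x, y⟩, ⟨hx, hy, hne⟩, rfl⟩; exact ⟨x, hx, y, hy, hne, rfl⟩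
  · rintro ⟨x, hx, y, hy, hne, rfl⟩; exact ⟨⟨x, y⟩, ⟨hx, hy, hne⟩, rfl⟩

lemma distSet_ne_zero {u : ℝ} (hu : u ∈ distSet X) : u ≠ 0 := by
  obtain ⟨x, _, y, _, hne, rfl⟩ := mem_distSet.mp hu
  exact fun hc => hne (by rwa [dist_eq_zero] at hc)

lemma distancesFrom_subset_distSet {x : EuclideanSpace ℝ (Fin d)} (hx : x ∈ X) :
    distancesFrom X x ⊆ distSet X := by
  intro z hz
  obtain ⟨y, hy, hne, rfl⟩ := mem_distancesFrom.mp hz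
  exact mem_distSet.mpr ⟨x, hx, y, hy, Ne.symm hne, rfl⟩

lemma distancesFrom_ne_zero {x : EuclideanSpace ℝ (Fin d)} {z : ℝ}
    (hz : z ∈ distancesFrom X x) : z ≠ 0 := by
  obtain ⟨y, _, hne, rfl⟩ := mem_distancesFrom.mp hz
  exact fun hc => hne (by rw [dist_comm] at hc; rwa [dist_eq_zero] at hc)

lemma dist_mem_inter {x y : EuclideanSpace ℝ (Fin d)} (hx : x ∈ X) (hy : y ∈ X)
    (hne : x ≠ y) : dist x y ∈ distancesFrom X x ∧ dist x y ∈ distancesFrom X y :=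
  ⟨dist_mem_distancesFrom hy (Ne.symm hne),
    by rw [dist_comm]; exact dist_mem_distancesFrom hx hne⟩

end Helpers

set_option maxHeartbeats 4000000 in
lemma sunflowerBound {d : ℕ} (X : Finset (EuclideanSpace ℝ (Fin d)))
    (hloc : ∀ x ∈ X, (distancesFrom X x).card ≤ 2)
    (h3 : 3 ≤ (distSet X).card) (hX1 : X.Nonempty)
    (a : ℝ) (hcore : ∀ x ∈ X, a ∈ distancesFrom X x) :
    2 * X.card ≤ d * (d + 1) + 4 := by
  classical
  obtain ⟨x00, hx00⟩ := hX1
  have ha0 : a ≠ 0 := distancesFrom_ne_zero (hcore x00 hx00)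
  have haD : a ∈ distSet X := distancesFrom_subset_distSet hx00 (hcore x00 hx00)
  set B : Finset ℝ := (distSet X).erase a with hB
  have hB2 : 2 ≤ B.card := by
    rw [hB, Finset.card_erase_of_mem haD]; omega
  obtain ⟨b1, hb1⟩ : B.Nonempty := Finset.card_pos.mp (by omega)
  set K : ℝ → Finset (EuclideanSpace ℝ (Fin d)) := fun b =>
    X.filter (fun x => b ∈ distancesFrom X x ∨ (b = b1 ∧ distancesFrom X x ⊆ {a})) with hK
  have hKsub : ∀ b, K b ⊆ X := fun b => Finset.filter_subset _ _
  have hBne : ∀ b ∈ B, b ≠ a ∧ b ∈ distSet X := fun b hb =>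
    ⟨(Finset.mem_erase.mp hb).1, (Finset.mem_erase.mp hb).2⟩
  have hAsub : ∀ b ∈ B, ∀ x ∈ K b, distancesFrom X x ⊆ {a, b} := by
    intro b hb x hx
    intro z hz
    by_contra hz'
    simp only [Finset.mem_insert, Finset.mem_singleton] at hz'
    push_neg at hz'
    obtain ⟨hx1, hx2⟩ := Finset.mem_filter.mp hx
    rcases hx2 with hbx | ⟨_, hsub⟩
    · have hsub3 : ({z, a, b} : Finset ℝ) ⊆ distancesFrom X x := by
        intro w hw
        simp only [Finset.mem_insert, Finset.mem_singleton] at hw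
        rcases hw with rfl | rfl | rfl
        · exact hz
        · exact hcore x hx1
        · exact hbx
      have hcard3 : ({z, a, b} : Finset ℝ).card = 3 := by
        rw [Finset.card_insert_of_notMem (by simp [hz'.1, hz'.2]),
          Finset.card_insert_of_notMem (by simp [Ne.symm (hBne b hb).1]),
          Finset.card_singleton]
      have := Finset.card_le_card hsub3
      have := hloc x hx1
      omega
    · have := hsub hz
      simp only [Finset.mem_singleton] at this
      exact hz'.1 this
  have hdisj : ∀ b ∈ B, ∀ b' ∈ B, b ≠ b' → Disjoint (K b) (K b') := by
    intro b hb b' hb' hne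
    rw [Finset.disjoint_left]
    intro x hx hx'
    have h1 := hAsub b hb x hx
    have h2 := hAsub b' hb' x hx'
    obtain ⟨hxX, hc⟩ := Finset.mem_filter.mp hx
    obtain ⟨_, hc'⟩ := Finset.mem_filter.mp hx'
    rcases hc with hbx | ⟨rfl, hsub⟩
    · have := h2 hbx
      simp only [Finset.mem_insert, Finset.mem_singleton] at this
      rcases this with rfl | rfl
      · exact (hBne b hb).1 rfl
      · exact hne rfl
    · rcases hc' with hbx' | ⟨rfl, _⟩
      · have := hsub hbx'
        simp only [Finset.mem_singleton] at this
        exact (hBne b' hb').1 this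
      · exact hne rfl
  have hcover : ∀ x ∈ X, ∃ b ∈ B, x ∈ K b := by
    intro x hx
    by_cases hex : ∃ b ∈ B, b ∈ distancesFrom X x
    · obtain ⟨b, hb, hbx⟩ := hex
      exact ⟨b, hb, Finset.mem_filter.mpr ⟨hx, Or.inl hbx⟩⟩
    · push_neg at hex
      refine ⟨b1, hb1, Finset.mem_filter.mpr ⟨hx, Or.inr ⟨rfl, ?_⟩⟩⟩
      intro z hz
      simp only [Finset.mem_singleton]
      by_contra hza
      exact hex z (Finset.mem_erase.mpr ⟨hza, distancesFrom_subset_distSet hx hz⟩) hz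
  have hwithin : ∀ b ∈ B, ∀ x ∈ K b, ∀ z ∈ K b, x ≠ z → dist x z = a ∨ dist x z = b := by
    intro b hb x hx z hz hne
    have := hAsub b hb x hx (dist_mem_distancesFrom (hKsub b hz) (Ne.symm hne))
    simpa only [Finset.mem_insert, Finset.mem_singleton] using this
  have hcross : ∀ b ∈ B, ∀ x ∈ K b, ∀ y ∈ X, y ∉ K b → dist x y = a := by
    intro b hb x hx y hy hynot
    have hne : y ≠ x := fun hcon => hynot (hcon ▸ hx)
    have h1 := hAsub b hb x hx (dist_mem_distancesFrom hy hne)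
    simp only [Finset.mem_insert, Finset.mem_singleton] at h1
    rcases h1 with h1 | h1
    · exact h1
    · exfalso
      apply hynot
      refine Finset.mem_filter.mpr ⟨hy, Or.inl ?_⟩
      rw [← h1, dist_comm]
      exact dist_mem_distancesFrom (hKsub b hx) (Ne.symm hne)
  have hK2 : ∀ b ∈ B, 2 ≤ (K b).card := by
    intro b hb
    obtain ⟨x, hxX, y, hyX, hxy, hdxy⟩ := mem_distSet.mp (hBne b hb).2
    have hxK : x ∈ K b := Finset.mem_filter.mpr ⟨hxX, Or.inl (hdxy ▸ dist_mem_distancesFrom hyX (Ne.symm hxy))⟩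
    have hyK : y ∈ K b := Finset.mem_filter.mpr ⟨hyX, Or.inl (by
      rw [← hdxy, dist_comm]; exact dist_mem_distancesFrom hxX hxy)⟩
    exact Finset.one_lt_card.mpr ⟨x, hxK, y, hyK, hxy⟩
  have hb0 : ∀ b ∈ B, b ≠ 0 := fun b hb => distSet_ne_zero (hBne b hb).2
  have hsphere : ∀ b ∈ B, ∃ y0, ∀ x ∈ K b, dist x y0 = a := by
    intro b hb
    obtain ⟨b', hb', hbb'⟩ := Finset.exists_mem_ne (s := B) (by omega) b
    obtain ⟨y0, hy0⟩ : (K b').Nonempty := Finset.card_pos.mp (by have := hK2 b' hb'; omega)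
    have hy0X : y0 ∈ X := hKsub b' hy0
    have hy0not : y0 ∉ K b := Finset.disjoint_left.mp (hdisj b' hb' b hb hbb') hy0
    exact ⟨y0, fun x hx => hcross b hb x hx y0 hy0X hy0not⟩
  have classBd : ∀ b ∈ B, 2 * (K b).card
      ≤ (finrank ℝ (diffSpan (K b))) * ((finrank ℝ (diffSpan (K b))) + 3) := by
    intro b hb
    obtain ⟨y0, hy0⟩ := hsphere b hb
    exact classBound (K b) y0 a a b ha0 (hb0 b hb) (hwithin b hb) hy0 (hK2 b hb)
  have main : ∀ S : Finset ℝ, S ⊆ B → S.Nonempty →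
      (2 * (S.biUnion K).card ≤ (finrank ℝ (diffSpan (S.biUnion K)))
          * ((finrank ℝ (diffSpan (S.biUnion K))) + 3)
       ∧ (2 ≤ S.card → 2 * (S.biUnion K).card ≤ (finrank ℝ (diffSpan (S.biUnion K)))
          * ((finrank ℝ (diffSpan (S.biUnion K))) + 1) + 4)) := by
    intro S
    induction S using Finset.induction_on with
    | empty => exact fun _ h => absurd h (by simp)
    | insert b S hbS ih =>
      intro hsub hne
      have hbB : b ∈ B := hsub (Finset.mem_insert_self _ _)
      have hSB : S ⊆ B := fun z hz => hsub (Finset.mem_insert_of_mem hz)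
      rcases S.eq_empty_or_nonempty with rfl | hSne
      · constructor
        · rw [show (insert b (∅ : Finset ℝ)) = {b} from rfl, Finset.singleton_biUnion]
          exact classBd b hbB
        · intro hc; simp at hc
      · have hU'eq : (insert b S).biUnion K = K b ∪ S.biUnion K := Finset.biUnion_insert
        have hdisjU : Disjoint (K b) (S.biUnion K) := by
          rw [Finset.disjoint_biUnion_right]
          intro b' hb'
          exact hdisj b hbB b' (hSB hb') (fun hcon => hbS (hcon ▸ hb'))
        have hcardU : ((insert b S).biUnion K).card = (K b).card + (S.biUnion K).card := by
          rw [hU'eq, Finset.card_union_of_disjoint hdisjU]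
        have hequi : ∀ y ∈ S.biUnion K, ∃ ρ, ∀ x ∈ K b, dist x y = ρ := by
          intro y hy
          obtain ⟨b', hb', hyK⟩ := Finset.mem_biUnion.mp hy
          refine ⟨a, fun x hx => hcross b hbB x hx y (hKsub b' hyK) ?_⟩
          exact Finset.disjoint_left.mp hdisjU.symm hy
        have hsplit := rank_split hequi
        rw [← hU'eq] at hsplit
        set q := finrank ℝ (diffSpan (K b)) with hqdef
        set QS := finrank ℝ (diffSpan (S.biUnion K)) with hQSdef
        set Q' := finrank ℝ (diffSpan ((insert b S).biUnion K)) with hQ'def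
        have hq1 : 1 ≤ q := diffSpan_rank_pos (hK2 b hbB)
        have hQS1 : 1 ≤ QS := by
          obtain ⟨b'', hb''⟩ := hSne
          have hsubU : K b'' ⊆ S.biUnion K := fun z hz => Finset.mem_biUnion.mpr ⟨b'', hb'', hz⟩
          exact diffSpan_rank_pos ((hK2 b'' (hSB hb'')).trans (Finset.card_le_card hsubU))
        obtain ⟨ih1, ih2⟩ := ih hSB hSne
        have hcb := classBd b hbB
        constructor
        · rw [hcardU]
          nlinarith [hsplit, ih1, hcb, hq1, hQS1]
        · intro _
          rw [hcardU]
          rcases Nat.lt_or_ge S.card 2 with hS1 | hS2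
          · have hkey : q + QS ≤ q * QS + 1 := by nlinarith [hq1, hQS1]
            nlinarith [hsplit, ih1, hcb, hq1, hQS1, hkey]
          · have := ih2 hS2
            nlinarith [hsplit, this, hcb, hq1, hQS1]
  have hXeq : X = B.biUnion K := by
    apply Finset.Subset.antisymm
    · intro x hx
      obtain ⟨b, hb, hK⟩ := hcover x hx
      exact Finset.mem_biUnion.mpr ⟨b, hb, hK⟩
    · intro x hx
      obtain ⟨b, _, hK⟩ := Finset.mem_biUnion.mp hx
      exact hKsub b hK
  obtain ⟨_, h2⟩ := main B (Finset.Subset.refl B) (Finset.card_pos.mp (by omega))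
  have hfin := h2 hB2
  rw [← hXeq] at hfin
  have hle : finrank ℝ (diffSpan X) ≤ d := rank_le_d X
  nlinarith [hfin, hle]

lemma arith3 {a b c d : ℕ} (ha : 1 ≤ a) (hb : 1 ≤ b) (hc : 1 ≤ c) (h : a + b + c ≤ d) :
    a * (a + 3) + b * (b + 3) + c * (c + 3) ≤ d * (d + 1) + 4 := by
  have h1 : (a + b + c) * (a + b + c + 1) ≤ d * (d + 1) :=
    Nat.mul_le_mul h (by omega)
  have h2 : a + b ≤ a * b + 1 := by nlinarith
  have h3 : c ≤ a * c := Nat.le_mul_of_pos_left _ (by omega)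
  have h4 : 1 ≤ b * c := Nat.one_le_iff_ne_zero.mpr (by positivity)
  nlinarith [h1, h2, h3, h4]

lemma arith2 {a b d : ℕ} (ha : 1 ≤ a) (hb : 1 ≤ b) (h : a + b ≤ d) :
    a * (a + 3) + b * (b + 3) + 2 ≤ d * (d + 1) + 4 := by
  have h1 : (a + b) * (a + b + 1) ≤ d * (d + 1) := Nat.mul_le_mul h (by omega)
  have h2 : a + b ≤ a * b + 1 := by nlinarith
  nlinarith [h1, h2]

lemma arith1 {a d : ℕ} (h : a + 1 ≤ d) : a * (a + 3) + 4 ≤ d * (d + 1) + 4 := by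
  have h1 : (a + 1) * (a + 2) ≤ d * (d + 1) := Nat.mul_le_mul h (by omega)
  nlinarith [h1]

set_option maxHeartbeats 4000000 in
lemma triangleBound {d : ℕ} (X : Finset (EuclideanSpace ℝ (Fin d)))
    (hloc : ∀ x ∈ X, (distancesFrom X x).card ≤ 2)
    (hd1 : 1 ≤ d) (hX2 : 2 ≤ X.card)
    (hnocore : ∀ a : ℝ, ∃ x ∈ X, a ∉ distancesFrom X x) :
    2 * X.card ≤ d * (d + 1) + 4 := by
  classical
  have hAne : ∀ x ∈ X, (distancesFrom X x).Nonempty := by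
    intro x hx
    obtain ⟨y, hyX, hyx⟩ := Finset.exists_mem_ne (s := X) (by omega) x
    exact ⟨dist x y, dist_mem_distancesFrom hyX hyx⟩
  have hsing : ∀ x ∈ X, ∀ s : ℝ, distancesFrom X x ≠ {s} := by
    intro x hx s hs
    obtain ⟨z, hzX, hzs⟩ := hnocore s
    have hzx : z ≠ x := by
      rintro rfl
      rw [hs] at hzs
      exact hzs (Finset.mem_singleton_self s)
    have h1 : dist x z ∈ distancesFrom X x := dist_mem_distancesFrom hzX hzx
    rw [hs, Finset.mem_singleton] at h1
    apply hzs
    have h2 : dist z x ∈ distancesFrom X z := dist_mem_distancesFrom hx hzx.symm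
    rwa [dist_comm, h1] at h2
  have pairOf : ∀ x ∈ X, ∃ p q : ℝ, p ≠ q ∧ distancesFrom X x = {p, q} := by
    intro x hx
    have h1 := hAne x hx
    have h2 := hloc x hx
    rcases Nat.lt_or_ge (distancesFrom X x).card 2 with hlt | hge
    · have : (distancesFrom X x).card = 1 := by
        have := Finset.card_pos.mpr h1; omega
      obtain ⟨s, hs⟩ := Finset.card_eq_one.mp this
      exact absurd hs (hsing x hx s)
    · have : (distancesFrom X x).card = 2 := by omega
      obtain ⟨p, q, hpq, hset⟩ := Finset.card_eq_two.mp this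
      exact ⟨p, q, hpq, hset⟩
  -- pick the three classes' representatives
  obtain ⟨x1, hx1X⟩ : X.Nonempty := Finset.card_pos.mp (by omega)
  obtain ⟨p, q, hpq, hA1⟩ := pairOf x1 hx1X
  obtain ⟨z1, hz1X, hz1p⟩ := hnocore p
  have hz1x1 : z1 ≠ x1 := by
    rintro rfl
    exact hz1p (by rw [hA1]; exact Finset.mem_insert_self _ _)
  have hdq : dist x1 z1 = q := by
    have h1 : dist x1 z1 ∈ distancesFrom X x1 := dist_mem_distancesFrom hz1X hz1x1
    rw [hA1, Finset.mem_insert, Finset.mem_singleton] at h1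
    rcases h1 with h1 | h1
    · exfalso
      apply hz1p
      have h2 : dist z1 x1 ∈ distancesFrom X z1 := dist_mem_distancesFrom hx1X hz1x1.symm
      rwa [dist_comm, h1] at h2
    · exact h1
  have hqz1 : q ∈ distancesFrom X z1 := by
    have h2 : dist z1 x1 ∈ distancesFrom X z1 := dist_mem_distancesFrom hx1X hz1x1.symm
    rwa [dist_comm, hdq] at h2
  obtain ⟨c, hcq, hAz1⟩ : ∃ c, c ≠ q ∧ distancesFrom X z1 = {q, c} := by
    obtain ⟨u, v, huv, hA⟩ := pairOf z1 hz1X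
    rw [hA, Finset.mem_insert, Finset.mem_singleton] at hqz1
    rcases hqz1 with rfl | rfl
    · exact ⟨v, fun hc => huv hc.symm, hA⟩
    · exact ⟨u, fun hc => huv hc, by rw [hA, Finset.pair_comm]⟩
  have hcp : c ≠ p := by
    rintro rfl
    exact hz1p (by rw [hAz1]; exact Finset.mem_insert_of_mem (Finset.mem_singleton_self _))
  obtain ⟨z2, hz2X, hz2q⟩ := hnocore q
  have hz2x1 : z2 ≠ x1 := by
    rintro rfl
    exact hz2q (by rw [hA1]; exact Finset.mem_insert_of_mem (Finset.mem_singleton_self _))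
  have hz2z1 : z2 ≠ z1 := by
    rintro rfl
    exact hz2q hqz1
  have hdp : dist x1 z2 = p := by
    have h1 : dist x1 z2 ∈ distancesFrom X x1 := dist_mem_distancesFrom hz2X hz2x1
    rw [hA1, Finset.mem_insert, Finset.mem_singleton] at h1
    rcases h1 with h1 | h1
    · exact h1
    · exfalso
      apply hz2q
      have h2 : dist z2 x1 ∈ distancesFrom X z2 := dist_mem_distancesFrom hx1X hz2x1.symm
      rwa [dist_comm, h1] at h2
  have hpz2 : p ∈ distancesFrom X z2 := by
    have h2 : dist z2 x1 ∈ distancesFrom X z2 := dist_mem_distancesFrom hx1X hz2x1.symm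
    rwa [dist_comm, hdp] at h2
  obtain ⟨c', hc'p, hAz2⟩ : ∃ c', c' ≠ p ∧ distancesFrom X z2 = {p, c'} := by
    obtain ⟨u, v, huv, hA⟩ := pairOf z2 hz2X
    rw [hA, Finset.mem_insert, Finset.mem_singleton] at hpz2
    rcases hpz2 with rfl | rfl
    · exact ⟨v, fun hc => huv hc.symm, hA⟩
    · exact ⟨u, fun hc => huv hc, by rw [hA, Finset.pair_comm]⟩
  have hcc' : c' = c := by
    have h1 : dist z1 z2 ∈ distancesFrom X z1 := dist_mem_distancesFrom hz2X hz2z1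
    have h2 : dist z2 z1 ∈ distancesFrom X z2 := dist_mem_distancesFrom hz1X hz2z1.symm
    rw [hAz1, Finset.mem_insert, Finset.mem_singleton] at h1
    rw [hAz2, Finset.mem_insert, Finset.mem_singleton] at h2
    rw [dist_comm] at h2
    rcases h1 with h1 | h1
    · exfalso
      apply hz2q
      rw [← h1, dist_comm]
      exact dist_mem_distancesFrom hz1X hz2z1.symm
    · rcases h2 with h2 | h2
      · exact absurd (h1.symm.trans h2) hcp
      · exact h2.symm.trans h1
  have hAz2' : distancesFrom X z2 = {p, c} := by rw [hAz2, hcc']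
  have hqc : q ≠ c := fun h => hcq h.symm
  have hp0 : p ≠ 0 := distancesFrom_ne_zero (by rw [hA1]; exact Finset.mem_insert_self _ _)
  have hq0 : q ≠ 0 := distancesFrom_ne_zero
    (by rw [hA1]; exact Finset.mem_insert_of_mem (Finset.mem_singleton_self _))
  have hc0 : c ≠ 0 := distancesFrom_ne_zero
    (by rw [hAz1]; exact Finset.mem_insert_of_mem (Finset.mem_singleton_self _))
  have hpairmem : ∀ y ∈ X, ∀ u v : ℝ, u ≠ v → u ∈ distancesFrom X y → v ∈ distancesFrom X y →
      distancesFrom X y = {u, v} := by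
    intro y hy u v huv hu hv
    have hsub : ({u, v} : Finset ℝ) ⊆ distancesFrom X y :=
      Finset.insert_subset_iff.mpr ⟨hu, Finset.singleton_subset_iff.mpr hv⟩
    have hcard : ({u, v} : Finset ℝ).card = 2 := Finset.card_pair huv
    exact (Finset.eq_of_subset_of_card_le hsub (by rw [hcard]; exact hloc y hy)).symm
  have htriple : ∀ y ∈ X, ¬(p ∈ distancesFrom X y ∧ q ∈ distancesFrom X y ∧ c ∈ distancesFrom X y) := by
    rintro y hy ⟨h1, h2, h3⟩
    have hsub : ({p, q, c} : Finset ℝ) ⊆ distancesFrom X y := by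
      intro w hw
      simp only [Finset.mem_insert, Finset.mem_singleton] at hw
      rcases hw with rfl | rfl | rfl
      · exact h1
      · exact h2
      · exact h3
    have hcard : ({p, q, c} : Finset ℝ).card = 3 := by
      rw [Finset.card_insert_of_notMem (by simp [hpq, Ne.symm hcp]),
        Finset.card_insert_of_notMem (by simp [hqc]), Finset.card_singleton]
    have := Finset.card_le_card hsub
    have := hloc y hy
    omega
  have classify : ∀ y ∈ X, distancesFrom X y = {p, q} ∨ distancesFrom X y = {q, c}
      ∨ distancesFrom X y = {p, c} := by
    intro y hy
    by_cases hy1 : y = x1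
    · exact Or.inl (hy1 ▸ hA1)
    by_cases hy2 : y = z1
    · exact Or.inr (Or.inl (hy2 ▸ hAz1))
    by_cases hy3 : y = z2
    · exact Or.inr (Or.inr (hy3 ▸ hAz2'))
    have e1 : dist x1 y = p ∨ dist x1 y = q := by
      have := dist_mem_distancesFrom (X := X) hy (fun h => hy1 h)
      rwa [hA1, Finset.mem_insert, Finset.mem_singleton] at this
    have m1 : dist x1 y ∈ distancesFrom X y := by
      rw [dist_comm]
      exact dist_mem_distancesFrom hx1X (fun h : x1 = y => hy1 h.symm)
    have e2 : dist z1 y = q ∨ dist z1 y = c := by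
      have := dist_mem_distancesFrom (X := X) hy (fun h => hy2 h)
      rwa [hAz1, Finset.mem_insert, Finset.mem_singleton] at this
    have m2 : dist z1 y ∈ distancesFrom X y := by
      rw [dist_comm]
      exact dist_mem_distancesFrom hz1X (fun h : z1 = y => hy2 h.symm)
    have e3 : dist z2 y = p ∨ dist z2 y = c := by
      have := dist_mem_distancesFrom (X := X) hy (fun h => hy3 h)
      rwa [hAz2', Finset.mem_insert, Finset.mem_singleton] at this
    have m3 : dist z2 y ∈ distancesFrom X y := by
      rw [dist_comm]
      exact dist_mem_distancesFrom hz2X (fun h : z2 = y => hy3 h.symm)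
    rcases e1 with e1 | e1 <;> rw [e1] at m1 <;> rcases e2 with e2 | e2 <;> rw [e2] at m2 <;>
      rcases e3 with e3 | e3 <;> rw [e3] at m3
    · exact Or.inl (hpairmem y hy p q hpq m1 m2)
    · exact absurd ⟨m1, m2, m3⟩ (htriple y hy)
    · exact Or.inr (Or.inr (hpairmem y hy p c (Ne.symm hcp) m1 m2))
    · exact Or.inr (Or.inr (hpairmem y hy p c (Ne.symm hcp) m1 m2))
    · exact Or.inl (hpairmem y hy p q hpq m3 m1)
    · exact Or.inr (Or.inl (hpairmem y hy q c hqc m1 m3))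
    · exact absurd ⟨m3, m1, m2⟩ (htriple y hy)
    · exact Or.inr (Or.inl (hpairmem y hy q c hqc m1 m2))
  -- the three classes
  set C1 := X.filter (fun y => distancesFrom X y = {p, q}) with hC1
  set C2 := X.filter (fun y => distancesFrom X y = {q, c}) with hC2
  set C3 := X.filter (fun y => distancesFrom X y = {p, c}) with hC3
  have hx1C : x1 ∈ C1 := Finset.mem_filter.mpr ⟨hx1X, hA1⟩
  have hz1C : z1 ∈ C2 := Finset.mem_filter.mpr ⟨hz1X, hAz1⟩
  have hz2C : z2 ∈ C3 := Finset.mem_filter.mpr ⟨hz2X, hAz2'⟩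
  have hne12 : ({p, q} : Finset ℝ) ≠ {q, c} := by
    intro h
    have : p ∈ ({q, c} : Finset ℝ) := h ▸ Finset.mem_insert_self _ _
    simp only [Finset.mem_insert, Finset.mem_singleton] at this
    rcases this with h' | h'
    · exact hpq h'
    · exact hcp h'.symm
  have hne13 : ({p, q} : Finset ℝ) ≠ {p, c} := by
    intro h
    have : q ∈ ({p, c} : Finset ℝ) := h ▸ Finset.mem_insert_of_mem (Finset.mem_singleton_self _)
    simp only [Finset.mem_insert, Finset.mem_singleton] at this
    rcases this with h' | h'
    · exact hpq h'.symm
    · exact hqc h'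
  have hne23 : ({q, c} : Finset ℝ) ≠ {p, c} := by
    intro h
    have : q ∈ ({p, c} : Finset ℝ) := h ▸ Finset.mem_insert_self _ _
    simp only [Finset.mem_insert, Finset.mem_singleton] at this
    rcases this with h' | h'
    · exact hpq h'.symm
    · exact hqc h'
  have hd12 : Disjoint C1 C2 := by
    rw [Finset.disjoint_left]
    intro y hyC1 hyC2
    exact hne12 ((Finset.mem_filter.mp hyC1).2.symm.trans (Finset.mem_filter.mp hyC2).2)
  have hd13 : Disjoint C1 C3 := by
    rw [Finset.disjoint_left]
    intro y hyC1 hyC3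
    exact hne13 ((Finset.mem_filter.mp hyC1).2.symm.trans (Finset.mem_filter.mp hyC3).2)
  have hd23 : Disjoint C2 C3 := by
    rw [Finset.disjoint_left]
    intro y hyC2 hyC3
    exact hne23 ((Finset.mem_filter.mp hyC2).2.symm.trans (Finset.mem_filter.mp hyC3).2)
  have hXeq : X = C1 ∪ C2 ∪ C3 := by
    apply Finset.Subset.antisymm
    · intro y hy
      rcases classify y hy with h | h | h
      · exact Finset.mem_union_left _ (Finset.mem_union_left _ (Finset.mem_filter.mpr ⟨hy, h⟩))
      · exact Finset.mem_union_left _ (Finset.mem_union_right _ (Finset.mem_filter.mpr ⟨hy, h⟩))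
      · exact Finset.mem_union_right _ (Finset.mem_filter.mpr ⟨hy, h⟩)
    · intro y hy
      rcases Finset.mem_union.mp hy with h | h
      · rcases Finset.mem_union.mp h with h' | h'
        · exact Finset.filter_subset _ _ h'
        · exact Finset.filter_subset _ _ h'
      · exact Finset.filter_subset _ _ h
  have hcardX : X.card = C1.card + C2.card + C3.card := by
    rw [hXeq, Finset.card_union_of_disjoint (Finset.disjoint_union_left.mpr ⟨hd13, hd23⟩),
      Finset.card_union_of_disjoint hd12]
  -- cross distances
  have cross12 : ∀ x ∈ C1, ∀ y ∈ C2, dist x y = q := by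
    intro x hx y hy
    obtain ⟨hxX, hAx⟩ := Finset.mem_filter.mp hx
    obtain ⟨hyX, hAy⟩ := Finset.mem_filter.mp hy
    have hne : y ≠ x := by
      rintro rfl
      exact hne12 (hAx.symm.trans hAy)
    have h1 : dist x y ∈ distancesFrom X x := dist_mem_distancesFrom hyX hne
    have h2 : dist y x ∈ distancesFrom X y := dist_mem_distancesFrom hxX (Ne.symm hne)
    rw [dist_comm] at h2
    rw [hAx, Finset.mem_insert, Finset.mem_singleton] at h1
    rw [hAy, Finset.mem_insert, Finset.mem_singleton] at h2
    rcases h1 with h1 | h1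
    · rcases h2 with h2 | h2
      · exact absurd (h1.symm.trans h2) hpq
      · exact absurd (h1.symm.trans h2) (Ne.symm hcp)
    · exact h1
  have cross13 : ∀ x ∈ C1, ∀ y ∈ C3, dist x y = p := by
    intro x hx y hy
    obtain ⟨hxX, hAx⟩ := Finset.mem_filter.mp hx
    obtain ⟨hyX, hAy⟩ := Finset.mem_filter.mp hy
    have hne : y ≠ x := by
      rintro rfl
      exact hne13 (hAx.symm.trans hAy)
    have h1 : dist x y ∈ distancesFrom X x := dist_mem_distancesFrom hyX hne
    have h2 : dist y x ∈ distancesFrom X y := dist_mem_distancesFrom hxX (Ne.symm hne)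
    rw [dist_comm] at h2
    rw [hAx, Finset.mem_insert, Finset.mem_singleton] at h1
    rw [hAy, Finset.mem_insert, Finset.mem_singleton] at h2
    rcases h1 with h1 | h1
    · exact h1
    · rcases h2 with h2 | h2
      · exact absurd (h1.symm.trans h2) (Ne.symm hpq)
      · exact absurd (h1.symm.trans h2) hqc
  have cross23 : ∀ x ∈ C2, ∀ y ∈ C3, dist x y = c := by
    intro x hx y hy
    obtain ⟨hxX, hAx⟩ := Finset.mem_filter.mp hx
    obtain ⟨hyX, hAy⟩ := Finset.mem_filter.mp hy
    have hne : y ≠ x := by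
      rintro rfl
      exact hne23 (hAx.symm.trans hAy)
    have h1 : dist x y ∈ distancesFrom X x := dist_mem_distancesFrom hyX hne
    have h2 : dist y x ∈ distancesFrom X y := dist_mem_distancesFrom hxX (Ne.symm hne)
    rw [dist_comm] at h2
    rw [hAx, Finset.mem_insert, Finset.mem_singleton] at h1
    rw [hAy, Finset.mem_insert, Finset.mem_singleton] at h2
    rcases h1 with h1 | h1
    · rcases h2 with h2 | h2
      · exact absurd (h1.symm.trans h2) (Ne.symm hpq)
      · exact absurd (h1.symm.trans h2) hqc
    · exact h1
  -- within-class distance structure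
  have within1 : ∀ x ∈ C1, ∀ z ∈ C1, x ≠ z → dist x z = p ∨ dist x z = q := by
    intro x hx z hz hne
    obtain ⟨hxX, hAx⟩ := Finset.mem_filter.mp hx
    have h1 : dist x z ∈ distancesFrom X x :=
      dist_mem_distancesFrom (Finset.filter_subset _ _ hz) (Ne.symm hne)
    rwa [hAx, Finset.mem_insert, Finset.mem_singleton] at h1
  have within2 : ∀ x ∈ C2, ∀ z ∈ C2, x ≠ z → dist x z = q ∨ dist x z = c := by
    intro x hx z hz hne
    obtain ⟨hxX, hAx⟩ := Finset.mem_filter.mp hx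
    have h1 : dist x z ∈ distancesFrom X x :=
      dist_mem_distancesFrom (Finset.filter_subset _ _ hz) (Ne.symm hne)
    rwa [hAx, Finset.mem_insert, Finset.mem_singleton] at h1
  have within3 : ∀ x ∈ C3, ∀ z ∈ C3, x ≠ z → dist x z = p ∨ dist x z = c := by
    intro x hx z hz hne
    obtain ⟨hxX, hAx⟩ := Finset.mem_filter.mp hx
    have h1 : dist x z ∈ distancesFrom X x :=
      dist_mem_distancesFrom (Finset.filter_subset _ _ hz) (Ne.symm hne)
    rwa [hAx, Finset.mem_insert, Finset.mem_singleton] at h1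
  have sphere1 : ∀ x ∈ C1, dist x z1 = q := fun x hx => cross12 x hx z1 hz1C
  have sphere2 : ∀ x ∈ C2, dist x z2 = c := fun x hx => cross23 x hx z2 hz2C
  have sphere3 : ∀ x ∈ C3, dist x x1 = p := fun x hx => by
    rw [dist_comm]; exact cross13 x1 hx1C x hx
  have bound1 : 2 ≤ C1.card → 2 * C1.card
      ≤ finrank ℝ (diffSpan C1) * (finrank ℝ (diffSpan C1) + 3) :=
    fun h => classBound C1 z1 q p q hp0 hq0 within1 sphere1 h
  have bound2 : 2 ≤ C2.card → 2 * C2.card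
      ≤ finrank ℝ (diffSpan C2) * (finrank ℝ (diffSpan C2) + 3) :=
    fun h => classBound C2 z2 c q c hq0 hc0 within2 sphere2 h
  have bound3 : 2 ≤ C3.card → 2 * C3.card
      ≤ finrank ℝ (diffSpan C3) * (finrank ℝ (diffSpan C3) + 3) :=
    fun h => classBound C3 x1 p p c hp0 hc0 within3 sphere3 h
  -- rank inequalities
  have hsplit23 : finrank ℝ (diffSpan C2) + finrank ℝ (diffSpan C3)
      ≤ finrank ℝ (diffSpan (C2 ∪ C3)) :=
    rank_split (fun y hy => ⟨c, fun x hx => cross23 x hx y hy⟩)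
  have h1R : finrank ℝ (diffSpan C1) + finrank ℝ (diffSpan (C2 ∪ C3)) ≤ d := by
    apply rank_split_d
    intro y hy
    rcases Finset.mem_union.mp hy with h | h
    · exact ⟨q, fun x hx => cross12 x hx y h⟩
    · exact ⟨p, fun x hx => cross13 x hx y h⟩
  have hsplit13 : finrank ℝ (diffSpan C1) + finrank ℝ (diffSpan C3)
      ≤ finrank ℝ (diffSpan (C1 ∪ C3)) :=
    rank_split (fun y hy => ⟨p, fun x hx => cross13 x hx y hy⟩)
  have h2R : finrank ℝ (diffSpan C2) + finrank ℝ (diffSpan (C1 ∪ C3)) ≤ d := by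
    apply rank_split_d
    intro y hy
    rcases Finset.mem_union.mp hy with h | h
    · exact ⟨q, fun x hx => by rw [dist_comm]; exact cross12 y h x hx⟩
    · exact ⟨c, fun x hx => cross23 x hx y h⟩
  have hsplit12 : finrank ℝ (diffSpan C1) + finrank ℝ (diffSpan C2)
      ≤ finrank ℝ (diffSpan (C1 ∪ C2)) :=
    rank_split (fun y hy => ⟨q, fun x hx => cross12 x hx y hy⟩)
  have h3R : finrank ℝ (diffSpan C3) + finrank ℝ (diffSpan (C1 ∪ C2)) ≤ d := by
    apply rank_split_d
    intro y hy
    rcases Finset.mem_union.mp hy with h | h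
    · exact ⟨p, fun x hx => by rw [dist_comm]; exact cross13 y h x hx⟩
    · exact ⟨c, fun x hx => by rw [dist_comm]; exact cross23 y h x hx⟩
  have hc1pos : 1 ≤ C1.card := Finset.card_pos.mpr ⟨x1, hx1C⟩
  have hc2pos : 1 ≤ C2.card := Finset.card_pos.mpr ⟨z1, hz1C⟩
  have hc3pos : 1 ≤ C3.card := Finset.card_pos.mpr ⟨z2, hz2C⟩
  -- final case analysis
  rcases le_or_gt 2 C1.card with h1b | h1s <;>
    rcases le_or_gt 2 C2.card with h2b | h2s <;>
    rcases le_or_gt 2 C3.card with h3b | h3s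
  · -- all big
    have i1 := diffSpan_rank_pos h1b
    have i2 := diffSpan_rank_pos h2b
    have i3 := diffSpan_rank_pos h3b
    have hsum : finrank ℝ (diffSpan C1) + finrank ℝ (diffSpan C2) + finrank ℝ (diffSpan C3)
        ≤ d := by omega
    linarith [arith3 i1 i2 i3 hsum, bound1 h1b, bound2 h2b, bound3 h3b, hcardX]
  · -- C3 singleton
    have i1 := diffSpan_rank_pos h1b
    have i2 := diffSpan_rank_pos h2b
    have hc3 : C3.card = 1 := by omega
    have hsum : finrank ℝ (diffSpan C1) + finrank ℝ (diffSpan C2) ≤ d := by omega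
    linarith [arith2 i1 i2 hsum, bound1 h1b, bound2 h2b, hcardX, hc3]
  · -- C2 singleton
    have i1 := diffSpan_rank_pos h1b
    have i3 := diffSpan_rank_pos h3b
    have hc2 : C2.card = 1 := by omega
    have hsum : finrank ℝ (diffSpan C1) + finrank ℝ (diffSpan C3) ≤ d := by omega
    linarith [arith2 i1 i3 hsum, bound1 h1b, bound3 h3b, hcardX, hc2]
  · -- C2, C3 singletons
    have hc2 : C2.card = 1 := by omega
    have hc3 : C3.card = 1 := by omega
    have hcard23 : (C2 ∪ C3).card = 2 := by
      rw [Finset.card_union_of_disjoint hd23]; omega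
    have hR : 1 ≤ finrank ℝ (diffSpan (C2 ∪ C3)) := diffSpan_rank_pos (by omega)
    have hsum : finrank ℝ (diffSpan C1) + 1 ≤ d := by omega
    linarith [arith1 hsum, bound1 h1b, hcardX, hc2, hc3]
  · -- C1 singleton
    have i2 := diffSpan_rank_pos h2b
    have i3 := diffSpan_rank_pos h3b
    have hc1 : C1.card = 1 := by omega
    have hsum : finrank ℝ (diffSpan C2) + finrank ℝ (diffSpan C3) ≤ d := by omega
    linarith [arith2 i2 i3 hsum, bound2 h2b, bound3 h3b, hcardX, hc1]
  · -- C1, C3 singletons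
    have hc1 : C1.card = 1 := by omega
    have hc3 : C3.card = 1 := by omega
    have hcard13 : (C1 ∪ C3).card = 2 := by
      rw [Finset.card_union_of_disjoint hd13]; omega
    have hR : 1 ≤ finrank ℝ (diffSpan (C1 ∪ C3)) := diffSpan_rank_pos (by omega)
    have hsum : finrank ℝ (diffSpan C2) + 1 ≤ d := by omega
    linarith [arith1 hsum, bound2 h2b, hcardX, hc1, hc3]
  · -- C1, C2 singletons
    have hc1 : C1.card = 1 := by omega
    have hc2 : C2.card = 1 := by omega
    have hcard12 : (C1 ∪ C2).card = 2 := by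
      rw [Finset.card_union_of_disjoint hd12]; omega
    have hR : 1 ≤ finrank ℝ (diffSpan (C1 ∪ C2)) := diffSpan_rank_pos (by omega)
    have hsum : finrank ℝ (diffSpan C3) + 1 ≤ d := by omega
    linarith [arith1 hsum, bound3 h3b, hcardX, hc1, hc2]
  · -- all singletons
    have hc1 : C1.card = 1 := by omega
    have hc2 : C2.card = 1 := by omega
    have hc3 : C3.card = 1 := by omega
    have hdd : 2 ≤ d * (d + 1) := by nlinarith [hd1]
    omega

/-- Every locally two-distance set in `ℝ^d` with at least `d(d+1)/2 + 3` points is a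
two-distance set. -/
theorem stmt5 (d : ℕ) (X : Finset (EuclideanSpace ℝ (Fin d)))
    (hloc : ∀ x ∈ X, (distancesFrom X x).card ≤ 2)
    (hcard : d * (d + 1) / 2 + 3 ≤ X.card) :
    (distSet X).card = 2 := by
  classical
  rcases Nat.eq_zero_or_pos d with rfl | hd1
  · exfalso
    haveI : Subsingleton (EuclideanSpace ℝ (Fin 0)) :=
      ⟨fun a b => PiLp.ext fun i => Fin.elim0 i⟩
    have hle : X.card ≤ 1 := Finset.card_le_one.mpr (fun a _ b _ => Subsingleton.elim a b)
    omega
  have hX2 : 2 ≤ X.card := by omega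
  have hdiv : d * (d + 1) / 2 * 2 = d * (d + 1) :=
    Nat.div_mul_cancel (Nat.even_mul_succ_self d).two_dvd
  by_contra hne
  have hcases : (distSet X).card ≤ 1 ∨ 3 ≤ (distSet X).card := by omega
  rcases hcases with hlow | hhigh
  · obtain ⟨x, hx, y, hy, hxy⟩ := Finset.one_lt_card.mp hX2
    have ha : dist x y ∈ distSet X := mem_distSet.mpr ⟨x, hx, y, hy, hxy, rfl⟩
    have hseteq : distSet X = {dist x y} :=
      (Finset.eq_of_subset_of_card_le (Finset.singleton_subset_iff.mpr ha)
        (by simpa using hlow)).symm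
    have hall : ∀ u ∈ X, ∀ v ∈ X, u ≠ v → dist u v = dist x y := by
      intro u hu v hv huv
      have : dist u v ∈ distSet X := mem_distSet.mpr ⟨u, hu, v, hv, huv, rfl⟩
      rwa [hseteq, Finset.mem_singleton] at this
    have ha0 : dist x y ≠ 0 := distSet_ne_zero ha
    have hb := oneDistBound X (dist x y) ha0 hall
    have hdd : d * 2 ≤ d * (d + 1) := Nat.mul_le_mul_left d (by omega)
    omega
  · by_cases hcore : ∃ a : ℝ, ∀ x ∈ X, a ∈ distancesFrom X x
    · obtain ⟨a, ha⟩ := hcore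
      have hb := sunflowerBound X hloc hhigh (Finset.card_pos.mp (by omega)) a ha
      omega
    · push_neg at hcore
      have hb := triangleBound X hloc hd1 hX2 hcore
      omega
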